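/- (Proposition 2, density asymptote) Suppose 0 < Ḡ(t) < 1 and g(t) > 0 for all sufficiently large t, and Ḡ(t) → 0 as t → ∞. Then f^BGMO(t) ∼ θ α^{θn} g(t) Ḡ(t)^{θn−1}/B(m,n) as t → ∞; precisely, the ratio B(m,n) f^BGMO(t) / (θ α^{θn} g(t) Ḡ(t)^{θn−1}) tends to 1 as t → ∞. -/

import Mathlib

/-- The GMO survival function `F̄^GMO(t) = (α Ḡ(t)/(1 − ᾱ Ḡ(t)))^θ`. -/
noncomputable def FbarGMO (G : ℝ → ℝ) (α θ t : ℝ) : ℝ :=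
  (α * (1 - G t) / (1 - (1 - α) * (1 - G t))) ^ θ

/-- The GMO pdf `f^GMO(t) = θ α^θ g(t) Ḡ(t)^{θ−1}/(1 − ᾱ Ḡ(t))^{θ+1}`. -/
noncomputable def fGMO (G g : ℝ → ℝ) (α θ t : ℝ) : ℝ :=
  θ * α ^ θ * g t * (1 - G t) ^ (θ - 1) / (1 - (1 - α) * (1 - G t)) ^ (θ + 1)

/-- The beta function `B(m,n) = ∫₀¹ v^{m−1}(1−v)^{n−1} dv`. -/
noncomputable def betaFn (m n : ℝ) : ℝ :=
  ∫ v in (0:ℝ)..1, v ^ (m - 1) * (1 - v) ^ (n - 1)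

/-- The BGMO-G pdf
`f^BGMO(t) = B(m,n)⁻¹ f^GMO(t) [1 − F̄^GMO(t)]^{m−1} [F̄^GMO(t)]^{n−1}`. -/
noncomputable def fBGMO (G g : ℝ → ℝ) (α θ m n t : ℝ) : ℝ :=
  (betaFn m n)⁻¹ * fGMO G g α θ t
    * (1 - FbarGMO G α θ t) ^ (m - 1) * (FbarGMO G α θ t) ^ (n - 1)

open Filter

lemma betaFn_integrable {m n : ℝ} (hm : 0 < m) (hn : 0 < n) :
    IntervalIntegrable (fun v : ℝ => v ^ (m - 1) * (1 - v) ^ (n - 1))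
      MeasureTheory.volume 0 1 := by
  have h1 : IntervalIntegrable (fun v : ℝ => v ^ (m - 1) * (1 - v) ^ (n - 1))
      MeasureTheory.volume 0 (1/2) := by
    apply (intervalIntegral.intervalIntegrable_rpow' (by linarith)).mul_continuousOn
    apply ContinuousOn.rpow_const (by fun_prop)
    intro x hx
    left
    rw [Set.uIcc_of_le (by norm_num)] at hx
    intro h
    have : x = 1 := by linarith [sub_eq_zero.mp h]
    linarith [hx.2]
  have h2 : IntervalIntegrable (fun v : ℝ => v ^ (m - 1) * (1 - v) ^ (n - 1))
      MeasureTheory.volume (1/2) 1 := by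
    have h0 := ((intervalIntegral.intervalIntegrable_rpow' (r := n - 1)
      (by linarith) (a := 0) (b := 1/2)).comp_sub_left 1)
    norm_num at h0
    have h0' := h0.symm.mul_continuousOn (g := fun v : ℝ => v ^ (m - 1)) ?_
    · have heq : (fun v : ℝ => v ^ (m - 1) * (1 - v) ^ (n - 1))
          = fun x : ℝ => (1 - x) ^ (n - 1) * x ^ (m - 1) := by
        funext x; exact mul_comm _ _
      rw [heq]; exact h0'
    · apply ContinuousOn.rpow_const (by fun_prop)
      intro x hx
      left
      rw [Set.uIcc_of_le (by norm_num)] at hx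
      intro h; rw [h] at hx; norm_num at hx
  exact h1.trans h2

lemma betaFn_pos {m n : ℝ} (hm : 0 < m) (hn : 0 < n) : 0 < betaFn m n := by
  apply intervalIntegral.intervalIntegral_pos_of_pos_on (betaFn_integrable hm hn) _ one_pos
  intro x hx
  have h1 : 0 < x := hx.1
  have h2 : 0 < 1 - x := by linarith [hx.2]
  positivity

lemma key_algebra (α θ m n u gt B : ℝ) (hα : 0 < α) (hθ : 0 < θ) (hu : 0 < u)
    (hg : 0 < gt) (hD : 0 < 1 - (1 - α) * u) (hB : 0 < B) :
    B * (B⁻¹ * (θ * α ^ θ * gt * u ^ (θ - 1) / (1 - (1 - α) * u) ^ (θ + 1))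
      * (1 - (α * u / (1 - (1 - α) * u)) ^ θ) ^ (m - 1)
      * ((α * u / (1 - (1 - α) * u)) ^ θ) ^ (n - 1))
      / (θ * α ^ (θ * n) * gt * u ^ (θ * n - 1))
    = (1 - (α * u / (1 - (1 - α) * u)) ^ θ) ^ (m - 1)
        / (1 - (1 - α) * u) ^ (θ * n + 1) := by
  set D := 1 - (1 - α) * u with hDdef
  have h1 : ((α * u / D) ^ θ) ^ (n - 1)
      = α ^ (θ * (n - 1)) * u ^ (θ * (n - 1)) / D ^ (θ * (n - 1)) := by
    rw [← Real.rpow_mul (by positivity), Real.div_rpow (by positivity) hD.le,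
      Real.mul_rpow hα.le hu.le]
  have h2 : α ^ (θ * n) = α ^ θ * α ^ (θ * (n - 1)) := by
    rw [← Real.rpow_add hα]; congr 1; ring
  have h3 : u ^ (θ * n - 1) = u ^ (θ - 1) * u ^ (θ * (n - 1)) := by
    rw [← Real.rpow_add hu]; congr 1; ring
  have h4 : D ^ (θ * n + 1) = D ^ (θ + 1) * D ^ (θ * (n - 1)) := by
    rw [← Real.rpow_add hD]; congr 1; ring
  have p1 : (0:ℝ) < α ^ θ := Real.rpow_pos_of_pos hα _
  have p2 : (0:ℝ) < α ^ (θ * (n - 1)) := Real.rpow_pos_of_pos hα _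
  have p3 : (0:ℝ) < u ^ (θ - 1) := Real.rpow_pos_of_pos hu _
  have p4 : (0:ℝ) < u ^ (θ * (n - 1)) := Real.rpow_pos_of_pos hu _
  have p5 : (0:ℝ) < D ^ (θ + 1) := Real.rpow_pos_of_pos hD _
  have p6 : (0:ℝ) < D ^ (θ * (n - 1)) := Real.rpow_pos_of_pos hD _
  rw [h1, h2, h3, h4]
  field_simp

/-- Proposition 2, density asymptote: suppose `0 < Ḡ(t) < 1` and
`g(t) > 0` for all sufficiently large `t`, and `Ḡ(t) → 0` as `t → ∞`. Then
`f^BGMO(t) ∼ θ α^{θn} g(t) Ḡ(t)^{θn−1}/B(m,n)` as `t → ∞`; precisely, the ratio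
`B(m,n) f^BGMO(t) / (θ α^{θn} g(t) Ḡ(t)^{θn−1})` tends to `1` as `t → ∞`. -/
theorem bgmo_density_asymptote (G g : ℝ → ℝ) (α θ m n : ℝ)
    (hα : 0 < α) (hθ : 0 < θ) (hm : 0 < m) (hn : 0 < n)
    (hev : ∀ᶠ t in atTop, 0 < 1 - G t ∧ 1 - G t < 1 ∧ 0 < g t)
    (hlim : Tendsto (fun t : ℝ => 1 - G t) atTop (nhds 0)) :
    Tendsto (fun t : ℝ =>
        betaFn m n * fBGMO G g α θ m n t
          / (θ * α ^ (θ * n) * g t * (1 - G t) ^ (θ * n - 1)))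
      atTop (nhds 1) := by
  have hB := betaFn_pos hm hn
  have hD : Tendsto (fun t : ℝ => 1 - (1 - α) * (1 - G t)) atTop (nhds 1) := by
    have := (hlim.const_mul (1 - α)).const_sub 1
    simpa using this
  have hF : Tendsto (fun t : ℝ => FbarGMO G α θ t) atTop (nhds 0) := by
    have hbase : Tendsto (fun t : ℝ => α * (1 - G t) / (1 - (1 - α) * (1 - G t)))
        atTop (nhds 0) := by
      have := (hlim.const_mul α).div hD one_ne_zero
      simpa [Pi.div_def] using this
    have := hbase.rpow_const (p := θ) (Or.inr hθ.le)
    rwa [Real.zero_rpow hθ.ne'] at this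
  have hHlim : Tendsto (fun t : ℝ =>
      (1 - FbarGMO G α θ t) ^ (m - 1) / (1 - (1 - α) * (1 - G t)) ^ (θ * n + 1))
      atTop (nhds 1) := by
    have h1 : Tendsto (fun t => (1 - FbarGMO G α θ t) ^ (m - 1)) atTop (nhds 1) := by
      have := ((hF.const_sub 1).rpow_const (p := m - 1) (Or.inl (by norm_num)))
      simpa using this
    have h2 : Tendsto (fun t => (1 - (1 - α) * (1 - G t)) ^ (θ * n + 1)) atTop (nhds 1) := by
      have := hD.rpow_const (p := θ * n + 1) (Or.inl one_ne_zero)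
      simpa using this
    have := h1.div h2 one_ne_zero
    simpa [Pi.div_def] using this
  refine hHlim.congr' ?_
  filter_upwards [hev] with t ht
  obtain ⟨hu, hu1, hg⟩ := ht
  have hDpos : 0 < 1 - (1 - α) * (1 - G t) := by
    rcases le_or_gt α 1 with h | h
    · nlinarith
    · nlinarith
  simp only [fBGMO, fGMO, FbarGMO]
  exact (key_algebra α θ m n (1 - G t) (g t) (betaFn m n) hα hθ hu hg hDpos hB).symm
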